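/- Let f ∈ z·ℤ≥0[[z]] and define f^{(k+1)} by 1 − f^{(k+1)}(z) = (1 − f^{(k)}(z))/(1 − z^{r_k}) with f^{(1)} = f, for a nondecreasing sequence (r_k) of positive integers tending to infinity with the positivity condition f^{(k)}_{r_k} ≥ 1 for all k. Then each f^{(k)} has nonnegative integer coefficients, and for every n the sequence (f^{(k)}_n)_k is eventually constant; moreover f^{(k+1)}_m = f^{(k)}_m − 1 if m = r_k, and f^{(k+1)}_m = f^{(k)}_m if m < r_k. -/

import Mathlib

open PowerSeries

/-- Let `f ∈ z·ℤ≥0[[z]]` (viewed in `ℚ[[z]]`) and define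
`f^{(k+1)}` by `1 − f^{(k+1)} = (1 − f^{(k)})/(1 − z^{r_k})`, `f^{(0)} = f`,
for a nondecreasing sequence `(r_k)` of positive integers tending to infinity,
with the positivity condition `f^{(k)}_{r_k} ≥ 1`.  Then each `f^{(k)}` has
nonnegative integer coefficients; for each `n` the sequence `(f^{(k)}_n)_k` is
eventually constant; `f^{(k+1)}_{r_k} = f^{(k)}_{r_k} − 1`; and
`f^{(k+1)}_m = f^{(k)}_m` for `m < r_k`. -/
theorem stmt5 (f : PowerSeries ℚ) (F : ℕ → PowerSeries ℚ) (r : ℕ → ℕ)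
    (hf0 : PowerSeries.constantCoeff (R := ℚ) f = 0)
    (hfnat : ∀ n, ∃ m : ℕ, PowerSeries.coeff (R := ℚ) n f = m)
    (hrpos : ∀ k, 0 < r k) (hrmono : Monotone r)
    (hrtop : Filter.Tendsto r Filter.atTop Filter.atTop)
    (hF0 : F 0 = f)
    (hFrec : ∀ k, 1 - F (k + 1) = (1 - F k) * (1 - X ^ r k)⁻¹)
    (hpos : ∀ k, 1 ≤ PowerSeries.coeff (R := ℚ) (r k) (F k)) :
    (∀ k n, ∃ m : ℕ, PowerSeries.coeff (R := ℚ) n (F k) = m) ∧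
    (∀ n, ∃ K, ∀ k, K ≤ k →
      PowerSeries.coeff (R := ℚ) n (F k) = PowerSeries.coeff (R := ℚ) n (F K)) ∧
    (∀ k, PowerSeries.coeff (R := ℚ) (r k) (F (k + 1)) =
      PowerSeries.coeff (R := ℚ) (r k) (F k) - 1) ∧
    (∀ k m, m < r k → PowerSeries.coeff (R := ℚ) m (F (k + 1)) =
      PowerSeries.coeff (R := ℚ) m (F k)) := by
  -- algebraic identity: F (k+1) = F k - X^(r k) + X^(r k) * F (k+1)
  have hinv : ∀ k, (1 - X ^ r k : PowerSeries ℚ) * (1 - X ^ r k)⁻¹ = 1 := by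
    intro k
    apply PowerSeries.mul_inv_cancel
    simp [hrpos k, (hrpos k).ne']
  have hser : ∀ k, F (k + 1) = F k - X ^ r k + X ^ r k * F (k + 1) := by
    intro k
    have h := hFrec k
    have h2 : (1 - F (k + 1)) * (1 - X ^ r k) = 1 - F k := by
      rw [h, mul_assoc, mul_comm ((1 - X ^ r k)⁻¹), hinv, mul_one]
    have := h2
    ring_nf at this ⊢
    linear_combination -this
  -- coefficient recurrence
  have key : ∀ k n, PowerSeries.coeff (R := ℚ) n (F (k + 1)) =
      PowerSeries.coeff (R := ℚ) n (F k) - (if n = r k then 1 else 0) +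
        (if r k ≤ n then PowerSeries.coeff (R := ℚ) (n - r k) (F (k + 1)) else 0) := by
    intro k n
    conv_lhs => rw [hser k]
    rw [map_add, map_sub, PowerSeries.coeff_X_pow, PowerSeries.coeff_X_pow_mul']
  have key_lt : ∀ k m, m < r k → PowerSeries.coeff (R := ℚ) m (F (k + 1)) =
      PowerSeries.coeff (R := ℚ) m (F k) := by
    intro k m hm
    rw [key k m, if_neg hm.ne, if_neg (not_le.2 hm)]
    ring
  have hc : ∀ k, PowerSeries.coeff (R := ℚ) 0 (F k) = 0 := by
    intro k
    induction k with
    | zero => simpa [hF0] using hf0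
    | succ k ih => rw [key_lt k 0 (hrpos k), ih]
  have key_eq : ∀ k, PowerSeries.coeff (R := ℚ) (r k) (F (k + 1)) =
      PowerSeries.coeff (R := ℚ) (r k) (F k) - 1 := by
    intro k
    rw [key k (r k), if_pos rfl, if_pos le_rfl, Nat.sub_self, hc]
    ring
  refine ⟨?_, ?_, key_eq, key_lt⟩
  · -- naturality
    intro k
    induction k with
    | zero => intro n; rw [hF0]; exact hfnat n
    | succ k ih =>
      intro n
      induction n using Nat.strong_induction_on with
      | _ n ihn =>
        rcases lt_trichotomy n (r k) with h | h | h
        · rw [key_lt k n h]; exact ih n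
        · subst h
          rw [key_eq k]
          obtain ⟨m, hm⟩ := ih (r k)
          have h1 : 1 ≤ (m : ℚ) := hm ▸ hpos k
          have hm1 : 1 ≤ m := by exact_mod_cast h1
          exact ⟨m - 1, by rw [hm]; push_cast [hm1]; ring⟩
        · rw [key k n, if_neg h.ne', if_pos h.le]
          obtain ⟨m1, hm1⟩ := ih n
          obtain ⟨m2, hm2⟩ := ihn (n - r k) (Nat.sub_lt (Nat.pos_of_ne_zero (by omega)) (hrpos k))
          exact ⟨m1 + m2, by rw [hm1, hm2]; push_cast; ring⟩
  · -- eventual constancy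
    intro n
    obtain ⟨K, hK⟩ := Filter.eventually_atTop.1 (Filter.tendsto_atTop.1 hrtop (n + 1))
    refine ⟨K, fun k hk => ?_⟩
    induction k with
    | zero => rw [Nat.le_zero.1 hk]
    | succ k ihk =>
      rcases Nat.lt_or_ge K (k + 1) with h | h
      · have hkK : K ≤ k := by omega
        rw [key_lt k n (by have := hK k hkK; omega), ihk hkK]
      · have : K = k + 1 := by omega
        rw [this]
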